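/- Internal-energy part of the dissipation bound (Appendix B): if λ ≥ 0 is a spectral-gap lower bound for (k, M), then ∑_{α,β∈I} k_{αβ} ∬ ( e_α(x) + e_β(y) ) dμ_α(x) dμ_β(y) ≥ (ζλ/M) ∑_{α,β∈I} ∬ ( e_α(x) + e_β(y) ) dμ_α(x) dμ_β(y) = 2ζλ ∑_{α∈I} ∫ e_α dμ_α, where the sums run over all ordered pairs (α,β). -/

import Mathlib

open MeasureTheory Finset

/-- Internal-energy part of the dissipation bound (Appendix B). -/
theorem stmt_6 {I : Type*} [Fintype I] [DecidableEq I] [Nonempty I]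
    (hcard : 1 < Fintype.card I)
    (M : I → ℝ) (hM : ∀ α, 0 < M α)
    (k : I → I → ℝ) (hk_nonneg : ∀ α β, 0 ≤ k α β) (hk_symm : ∀ α β, k α β = k β α)
    (lam : ℝ) (hlam : 0 ≤ lam)
    (hgap : ∀ y : I → ℝ,
      lam * ∑ α, ∑ β ∈ univ.filter (fun β => β ≠ α), (y α - y β) ^ 2 * M α * M β
        ≤ (∑ α, M α) *
            ∑ α, ∑ β ∈ univ.filter (fun β => β ≠ α), k α β * (y α - y β) ^ 2 * M α * M β)
    (ζ : ℝ) (hζ : ζ = 1 - (univ.sup' univ_nonempty M) / (∑ α, M α))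
    {d : ℕ} (hd : 1 ≤ d)
    (μ : I → Measure (EuclideanSpace ℝ (Fin d)))
    [∀ α, IsFiniteMeasure (μ α)]
    (hμ : ∀ α, ((μ α) Set.univ).toReal = M α)
    (e : I → EuclideanSpace ℝ (Fin d) → ℝ)
    (he_meas : ∀ α, Measurable (e α))
    (he_nonneg : ∀ α x, 0 ≤ e α x)
    (he_int : ∀ α, Integrable (e α) (μ α)) :
    (ζ * lam / (∑ α, M α)) *
          ∑ α, ∑ β, ∫ x, ∫ y, (e α x + e β y) ∂(μ β) ∂(μ α)
        ≤ ∑ α, ∑ β, k α β * ∫ x, ∫ y, (e α x + e β y) ∂(μ β) ∂(μ α)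
      ∧ (ζ * lam / (∑ α, M α)) *
          ∑ α, ∑ β, ∫ x, ∫ y, (e α x + e β y) ∂(μ β) ∂(μ α)
        = 2 * ζ * lam * ∑ α, ∫ x, e α x ∂(μ α) := by
  classical
  have hMtot_pos : 0 < ∑ α, M α := Finset.sum_pos (fun α _ => hM α) univ_nonempty
  set Mtot := ∑ α, M α with hMtot
  set E : I → ℝ := fun α => ∫ x, e α x ∂(μ α) with hE
  have hE_nonneg : ∀ α, 0 ≤ E α := fun α => integral_nonneg (he_nonneg α)
  -- value of the double integral
  have hdint : ∀ α β, (∫ x, ∫ y, (e α x + e β y) ∂(μ β) ∂(μ α)) = M β * E α + M α * E β := by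
    intro α β
    have h1 : ∀ x, (∫ y, (e α x + e β y) ∂(μ β)) = M β * e α x + E β := by
      intro x
      rw [integral_add (integrable_const _) (he_int β), integral_const]
      simp [measureReal_def, hμ β, mul_comm, hE]
    simp_rw [h1]
    rw [integral_add ((he_int α).const_mul _) (integrable_const _), integral_const_mul,
      integral_const]
    simp [measureReal_def, hμ α, mul_comm, hE]
  -- key estimate: ζ * lam ≤ ∑ β, k α β * M β for each α
  have hkey : ∀ α, ζ * lam ≤ ∑ β, k α β * M β := by
    intro α
    have hy := hgap (fun γ => if γ = α then 1 else 0)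
    simp only [Finset.filter_ne'] at hy
    -- left sum
    have hL : (∑ γ, ∑ δ ∈ univ.erase γ,
        ((if γ = α then (1:ℝ) else 0) - (if δ = α then 1 else 0)) ^ 2 * M γ * M δ)
        = 2 * (M α * (Mtot - M α)) := by
      rw [← Finset.add_sum_erase univ _ (Finset.mem_univ α)]
      have h1 : (∑ δ ∈ univ.erase α,
          ((if α = α then (1:ℝ) else 0) - (if δ = α then 1 else 0)) ^ 2 * M α * M δ)
          = ∑ δ ∈ univ.erase α, M α * M δ := by
        apply Finset.sum_congr rfl
        intro δ hδ
        have : δ ≠ α := Finset.ne_of_mem_erase hδ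
        simp [this]
      have h2 : (∑ γ ∈ univ.erase α, ∑ δ ∈ univ.erase γ,
          ((if γ = α then (1:ℝ) else 0) - (if δ = α then 1 else 0)) ^ 2 * M γ * M δ)
          = ∑ γ ∈ univ.erase α, M γ * M α := by
        apply Finset.sum_congr rfl
        intro γ hγ
        have hγα : γ ≠ α := Finset.ne_of_mem_erase hγ
        have : (∑ δ ∈ univ.erase γ,
            ((if γ = α then (1:ℝ) else 0) - (if δ = α then 1 else 0)) ^ 2 * M γ * M δ)
            = ∑ δ ∈ univ.erase γ, (if δ = α then M γ * M α else 0) := by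
          apply Finset.sum_congr rfl
          intro δ _
          by_cases hδ : δ = α <;> simp [hδ, hγα]
        rw [this, Finset.sum_ite_eq' (univ.erase γ) α (fun _ => M γ * M α)]
        simp [Finset.mem_erase, hγα.symm]
      rw [h1, h2, ← Finset.mul_sum, ← Finset.sum_mul,
        Finset.sum_erase_eq_sub (Finset.mem_univ α), ← hMtot]
      ring
    -- right sum
    have hR : (∑ γ, ∑ δ ∈ univ.erase γ,
        k γ δ * ((if γ = α then (1:ℝ) else 0) - (if δ = α then 1 else 0)) ^ 2 * M γ * M δ)
        = 2 * (M α * ∑ δ ∈ univ.erase α, k α δ * M δ) := by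
      rw [← Finset.add_sum_erase univ _ (Finset.mem_univ α)]
      have h1 : (∑ δ ∈ univ.erase α,
          k α δ * ((if α = α then (1:ℝ) else 0) - (if δ = α then 1 else 0)) ^ 2 * M α * M δ)
          = ∑ δ ∈ univ.erase α, k α δ * M α * M δ := by
        apply Finset.sum_congr rfl
        intro δ hδ
        have : δ ≠ α := Finset.ne_of_mem_erase hδ
        simp [this]
      have h2 : (∑ γ ∈ univ.erase α, ∑ δ ∈ univ.erase γ,
          k γ δ * ((if γ = α then (1:ℝ) else 0) - (if δ = α then 1 else 0)) ^ 2 * M γ * M δ)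
          = ∑ γ ∈ univ.erase α, k γ α * M γ * M α := by
        apply Finset.sum_congr rfl
        intro γ hγ
        have hγα : γ ≠ α := Finset.ne_of_mem_erase hγ
        have : (∑ δ ∈ univ.erase γ,
            k γ δ * ((if γ = α then (1:ℝ) else 0) - (if δ = α then 1 else 0)) ^ 2 * M γ * M δ)
            = ∑ δ ∈ univ.erase γ, (if δ = α then k γ α * M γ * M α else 0) := by
          apply Finset.sum_congr rfl
          intro δ _
          by_cases hδ : δ = α <;> simp [hδ, hγα]
        rw [this, Finset.sum_ite_eq' (univ.erase γ) α (fun _ => k γ α * M γ * M α)]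
        simp [Finset.mem_erase, hγα.symm]
      rw [h1, h2]
      have h3 : (∑ γ ∈ univ.erase α, k γ α * M γ * M α)
          = ∑ γ ∈ univ.erase α, k α γ * M γ * M α := by
        apply Finset.sum_congr rfl; intro γ _; rw [hk_symm]
      rw [h3, Finset.mul_sum, Finset.mul_sum, ← Finset.sum_add_distrib]
      apply Finset.sum_congr rfl
      intro δ _
      ring
    rw [hL, hR] at hy
    -- erase sum vs full sum
    have herase_le : (∑ δ ∈ univ.erase α, k α δ * M δ) ≤ ∑ δ, k α δ * M δ := by
      apply Finset.sum_le_sum_of_subset_of_nonneg (Finset.erase_subset _ _)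
      intro δ _ _
      exact mul_nonneg (hk_nonneg α δ) (hM δ).le
    have hsup : M α ≤ univ.sup' univ_nonempty M := Finset.le_sup' M (Finset.mem_univ α)
    have hζle : ζ * Mtot ≤ Mtot - M α := by
      rw [hζ]
      rw [sub_mul, one_mul, div_mul_cancel₀ _ hMtot_pos.ne']
      linarith
    -- from hy: lam * (M α * (Mtot - M α)) ≤ Mtot * (M α * ∑erase)
    have h4 : lam * (Mtot - M α) ≤ Mtot * ∑ δ ∈ univ.erase α, k α δ * M δ := by
      have hMα := hM α
      nlinarith [hy]
    have h5 : ζ * lam * Mtot ≤ Mtot * ∑ δ, k α δ * M δ := by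
      calc ζ * lam * Mtot = lam * (ζ * Mtot) := by ring
        _ ≤ lam * (Mtot - M α) := by
            apply mul_le_mul_of_nonneg_left hζle hlam
        _ ≤ Mtot * ∑ δ ∈ univ.erase α, k α δ * M δ := h4
        _ ≤ Mtot * ∑ δ, k α δ * M δ := by
            apply mul_le_mul_of_nonneg_left herase_le hMtot_pos.le
    nlinarith [h5]
  -- rewrite double integrals
  simp_rw [hdint]
  have hsum1 : (∑ α, ∑ β, (M β * E α + M α * E β)) = 2 * Mtot * ∑ α, E α := by
    have hinner : ∀ α : I, (∑ β, (M β * E α + M α * E β))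
        = (∑ β, M β) * E α + M α * ∑ β, E β := by
      intro α
      rw [Finset.sum_add_distrib, ← Finset.sum_mul, ← Finset.mul_sum]
    simp_rw [hinner]
    rw [Finset.sum_add_distrib, ← Finset.mul_sum, ← Finset.sum_mul, ← hMtot]
    ring
  have hsum2 : (∑ α, ∑ β, k α β * (M β * E α + M α * E β))
      = 2 * ∑ α, E α * ∑ β, k α β * M β := by
    have : ∀ α β : I, k α β * (M β * E α + M α * E β)
        = k α β * M β * E α + k α β * M α * E β := by intro α β; ring
    simp_rw [this, Finset.sum_add_distrib]
    have hA : (∑ α, ∑ β, k α β * M β * E α) = ∑ α, E α * ∑ β, k α β * M β := by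
      apply Finset.sum_congr rfl
      intro α _
      rw [Finset.mul_sum, ← Finset.sum_mul]
      rw [Finset.sum_mul]
      apply Finset.sum_congr rfl
      intro β _; ring
    have hB : (∑ α, ∑ β, k α β * M α * E β) = ∑ α, E α * ∑ β, k α β * M β := by
      rw [Finset.sum_comm]
      apply Finset.sum_congr rfl
      intro β _
      rw [Finset.mul_sum]
      apply Finset.sum_congr rfl
      intro α _
      rw [hk_symm]
      ring
    rw [hA, hB]
    ring
  rw [hsum1, hsum2]
  constructor
  · have hstep : (∑ α, ζ * lam * E α) ≤ ∑ α, E α * ∑ β, k α β * M β := by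
      apply Finset.sum_le_sum
      intro α _
      calc ζ * lam * E α = E α * (ζ * lam) := by ring
        _ ≤ E α * ∑ β, k α β * M β := mul_le_mul_of_nonneg_left (hkey α) (hE_nonneg α)
    have hlhs : ζ * lam / Mtot * (2 * Mtot * ∑ α, E α) = 2 * ∑ α, ζ * lam * E α := by
      rw [← Finset.mul_sum]
      field_simp
    rw [hlhs]
    linarith
  · rw [show ζ * lam / Mtot * (2 * Mtot * ∑ α, E α)
        = (Mtot / Mtot) * (2 * ζ * lam * ∑ α, E α) by ring,
      div_self hMtot_pos.ne', one_mul]
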